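/- Let W₁ : ℝ → ℝ be defined by W₁(y) = e^{−y²/4} − (y/2)∫_y^∞ e^{−ζ²/4} dζ, and set F(y) = (W₁′(y))² − W₁(y)W₁″(y). Then F′(y) < 0 for all y > 0, F(0) = (1/2)(π/2 − 1) > 0, and F(y) → 0 as y → ∞; consequently F(y) > 0 for all y > 0, and hence (W₁/W₁′)′(y) = F(y)/(W₁′(y))² > 0 for all y > 0. -/

import Mathlib

set_option autoImplicit false

open Set Filter

/-- The (extended) function `W₁(y) = e^{-y²/4} - (y/2) ∫_y^∞ e^{-ζ²/4} dζ`. -/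
noncomputable def W1ext (y : ℝ) : ℝ :=
  Real.exp (-y ^ 2 / 4) - y / 2 * ∫ ζ in Ioi y, Real.exp (-ζ ^ 2 / 4)

/-- The Wronskian-type expression `F = (W₁')² - W₁·W₁''`. -/
noncomputable def F16 (y : ℝ) : ℝ :=
  (deriv W1ext y) ^ 2 - W1ext y * deriv (deriv W1ext) y

section Aux

open MeasureTheory intervalIntegral Real

noncomputable def gfun (ζ : ℝ) : ℝ := Real.exp (-ζ ^ 2 / 4)

lemma gfun_cont : Continuous gfun := by
  unfold gfun; fun_prop

lemma gfun_pos (ζ : ℝ) : 0 < gfun ζ := Real.exp_pos _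

lemma gfun_int : MeasureTheory.Integrable gfun := by
  have := integrable_exp_neg_mul_sq (by norm_num : (0:ℝ) < 1/4)
  convert this using 2 with x
  unfold gfun; ring_nf

noncomputable def Ifun (y : ℝ) : ℝ := ∫ ζ in Ioi y, gfun ζ

lemma Ifun_split (a b : ℝ) (hab : a ≤ b) :
    Ifun a = (∫ t in a..b, gfun t) + Ifun b := by
  rw [intervalIntegral.integral_of_le hab, Ifun, Ifun,
    ← MeasureTheory.setIntegral_union (Ioc_disjoint_Ioi le_rfl) measurableSet_Ioi
      gfun_int.integrableOn gfun_int.integrableOn, Ioc_union_Ioi_eq_Ioi hab]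

lemma hasDerivAt_Ifun (y : ℝ) : HasDerivAt Ifun (-(gfun y)) y := by
  have key : ∀ z : ℝ, Ifun z = Ifun (y - 1) - ∫ t in (y-1)..z, gfun t := by
    intro z
    rcases le_total (y-1) z with h | h
    · rw [Ifun_split (y-1) z h]; ring
    · rw [Ifun_split z (y-1) h, intervalIntegral.integral_symm]; ring
  have hd : HasDerivAt (fun z => Ifun (y-1) - ∫ t in (y-1)..z, gfun t) (-(gfun y)) y := by
    have h1 : HasDerivAt (fun z => ∫ t in (y-1)..z, gfun t) (gfun y) y :=
      intervalIntegral.integral_hasDerivAt_right gfun_int.intervalIntegrable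
        (gfun_cont.stronglyMeasurableAtFilter _ _) gfun_cont.continuousAt
    exact ((hasDerivAt_const y (Ifun (y-1))).sub h1).congr_deriv (by ring)
  exact hd.congr_deriv rfl |>.congr_of_eventuallyEq (Filter.Eventually.of_forall key)

lemma integral_Ioi_pos {f : ℝ → ℝ} {y : ℝ} (hf : IntegrableOn f (Ioi y))
    (hpos : ∀ x, 0 < f x) : 0 < ∫ x in Ioi y, f x := by
  refine (setIntegral_pos_iff_support_of_nonneg_ae
    (Filter.Eventually.of_forall (fun x => (hpos x).le)) hf).2 ?_
  have : (Function.support f) = univ := by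
    ext x; simp [Function.support, (hpos x).ne']
  rw [this, univ_inter]
  simp [Real.volume_Ioi]

lemma Ifun_pos (y : ℝ) : 0 < Ifun y :=
  integral_Ioi_pos gfun_int.integrableOn gfun_pos

lemma Ifun_zero : Ifun 0 = Real.sqrt Real.pi := by
  have := integral_gaussian_Ioi (1/4 : ℝ)
  unfold Ifun gfun
  rw [show (fun ζ : ℝ => Real.exp (-ζ^2/4)) = fun ζ : ℝ => Real.exp (-(1/4) * ζ^2) by
    funext ζ; ring_nf]
  rw [this]
  rw [show Real.pi / (1/4) = 4 * Real.pi by ring, show (4:ℝ)*Real.pi = 2^2 * Real.pi by norm_num,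
    Real.sqrt_mul (by positivity), Real.sqrt_sq (by norm_num)]
  ring

lemma hasDerivAt_gfun (y : ℝ) : HasDerivAt gfun (-(y/2) * gfun y) y := by
  have h : HasDerivAt (fun y : ℝ => -y^2/4) (-(y/2)) y := by
    have := ((hasDerivAt_pow 2 y).neg).div_const 4
    simpa using this.congr_deriv (by ring)
  exact h.exp.congr_deriv (by unfold gfun; ring)

lemma tendsto_gfun : Tendsto gfun atTop (nhds 0) := by
  have h1 : Tendsto (fun y : ℝ => y^2/4) atTop atTop :=
    (tendsto_pow_atTop (by norm_num)).atTop_div_const (by norm_num)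
  have h2 : Tendsto (fun y : ℝ => -y^2/4) atTop atBot := by
    have := tendsto_neg_atTop_atBot.comp h1
    refine this.congr fun y => by simp [Function.comp]; ring
  exact (Real.tendsto_exp_atBot).comp h2

/-- the comparison function -/
noncomputable def hcmp (ζ : ℝ) : ℝ := 2*ζ/(ζ^2+2) * gfun ζ
noncomputable def hcmp' (ζ : ℝ) : ℝ := (8/(ζ^2+2)^2 - 1) * gfun ζ

lemma hasDerivAt_hcmp (y : ℝ) : HasDerivAt hcmp (hcmp' y) y := by
  have hne : (y^2+2 : ℝ) ≠ 0 := by positivity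
  have hv : HasDerivAt (fun ζ : ℝ => ζ^2+2) (2*y) y := by
    simpa using (hasDerivAt_pow 2 y).add_const 2
  have := (((hasDerivAt_id y).const_mul 2).div hv hne).mul (hasDerivAt_gfun y)
  refine this.congr_deriv ?_
  unfold hcmp'
  simp only [Pi.div_apply, id]
  field_simp
  ring

lemma tendsto_hcmp : Tendsto hcmp atTop (nhds 0) := by
  apply squeeze_zero' (g := fun y => gfun y)
  · filter_upwards [eventually_ge_atTop (0:ℝ)] with y hy
    exact mul_nonneg (by positivity) (gfun_pos y).le
  · filter_upwards [eventually_ge_atTop (0:ℝ)] with y hy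
    have h1 : 2*y/(y^2+2) ≤ 1 := by
      rw [div_le_one (by positivity)]; nlinarith [sq_nonneg (y-1)]
    calc 2*y/(y^2+2) * gfun y ≤ 1 * gfun y :=
          mul_le_mul_of_nonneg_right h1 (gfun_pos y).le
      _ = gfun y := one_mul _
  · exact tendsto_gfun

lemma hcmp'_integrableOn (y : ℝ) : IntegrableOn hcmp' (Ioi y) := by
  refine (Integrable.mono' (gfun_int.const_mul 2) ?_ ?_).integrableOn
  · exact ((((continuous_const.div (by continuity) (fun x => by positivity)).sub
      continuous_const).mul gfun_cont)).aestronglyMeasurable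
  · refine Filter.Eventually.of_forall fun x => ?_
    have h1 : (0:ℝ) < 8/(x^2+2)^2 := by positivity
    have h2 : 8/(x^2+2)^2 ≤ 2 := by
      rw [div_le_iff₀ (by positivity)]; nlinarith [sq_nonneg x, sq_nonneg (x^2)]
    have := gfun_pos x
    rw [Real.norm_eq_abs, hcmp', abs_mul, abs_of_pos this]
    have : |8/(x^2+2)^2 - 1| ≤ 2 := by rw [abs_le]; constructor <;> nlinarith
    calc |8/(x^2+2)^2 - 1| * gfun x ≤ 2 * gfun x :=
        mul_le_mul_of_nonneg_right this (gfun_pos x).le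
      _ = 2 * gfun x := rfl

lemma Ifun_lower {y : ℝ} : 2*y/(y^2+2) * gfun y < Ifun y := by
  have hFTC : ∫ ζ in Ioi y, hcmp' ζ = 0 - hcmp y :=
    integral_Ioi_of_hasDerivAt_of_tendsto' (fun x _ => hasDerivAt_hcmp x)
      (hcmp'_integrableOn y) tendsto_hcmp
  have hadd : ∫ ζ in Ioi y, (gfun ζ + hcmp' ζ) = Ifun y - hcmp y := by
    rw [integral_add gfun_int.integrableOn (hcmp'_integrableOn y), hFTC]
    simp only [Ifun]; ring
  have hpos : 0 < ∫ ζ in Ioi y, (gfun ζ + hcmp' ζ) := by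
    refine integral_Ioi_pos (gfun_int.integrableOn.add (hcmp'_integrableOn y)) fun x => ?_
    have h : gfun x + hcmp' x = 8/(x^2+2)^2 * gfun x := by rw [hcmp']; ring
    have := gfun_pos x
    rw [h]; positivity
  rw [hadd] at hpos
  have : hcmp y = 2*y/(y^2+2) * gfun y := rfl
  linarith [hpos]

lemma q_integrableOn (y : ℝ) : IntegrableOn (fun ζ : ℝ => ζ * gfun ζ) (Ioi y) := by
  have := integrable_mul_exp_neg_mul_sq (by norm_num : (0:ℝ) < 1/4)
  refine Integrable.integrableOn (this.congr ?_)
  refine Filter.Eventually.of_forall fun x => ?_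
  unfold gfun; ring_nf

lemma integral_q (y : ℝ) : ∫ ζ in Ioi y, ζ * gfun ζ = 2 * gfun y := by
  have hFTC : ∫ ζ in Ioi y, ζ * gfun ζ = 0 - (-2 * gfun y) := by
    refine integral_Ioi_of_hasDerivAt_of_tendsto' (f := fun ζ => -2 * gfun ζ)
      (fun x _ => ((hasDerivAt_gfun x).const_mul (-2)).congr_deriv (by ring))
      (q_integrableOn y) ?_
    simpa using tendsto_gfun.const_mul (-2 : ℝ)
  rw [hFTC]; ring

lemma Ifun_upper {y : ℝ} (hy : 0 < y) : Ifun y ≤ 2/y * gfun y := by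
  have hmono : Ifun y ≤ ∫ ζ in Ioi y, (1/y) * (ζ * gfun ζ) := by
    refine setIntegral_mono_on gfun_int.integrableOn
      ((q_integrableOn y).const_mul (1/y)) measurableSet_Ioi fun x hx => ?_
    have hx' : y ≤ x := le_of_lt hx
    have : 1 ≤ x/y := (le_div_iff₀ hy).2 (by linarith)
    calc gfun x = 1 * gfun x := (one_mul _).symm
      _ ≤ (x/y) * gfun x := mul_le_mul_of_nonneg_right this (gfun_pos x).le
      _ = 1/y * (x * gfun x) := by ring
  rw [MeasureTheory.integral_const_mul, integral_q] at hmono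
  have : 1/y * (2 * gfun y) = 2/y * gfun y := by ring
  linarith [hmono]

lemma tendsto_Ifun : Tendsto Ifun atTop (nhds 0) := by
  apply squeeze_zero' (g := fun y => 2 * gfun y)
  · filter_upwards with y
    exact (Ifun_pos y).le
  · filter_upwards [eventually_ge_atTop (1:ℝ)] with y hy
    have h1 := Ifun_upper (y := y) (by linarith)
    have h2 : 2/y ≤ 2 := by
      rw [div_le_iff₀ (by linarith)]; nlinarith
    calc Ifun y ≤ 2/y * gfun y := h1
      _ ≤ 2 * gfun y := mul_le_mul_of_nonneg_right h2 (gfun_pos y).le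
  · simpa using tendsto_gfun.const_mul (2:ℝ)

end Aux

section Deriv

lemma W1ext_eq (y : ℝ) : W1ext y = gfun y - y / 2 * Ifun y := rfl

lemma hasDerivAt_W1ext (y : ℝ) : HasDerivAt W1ext (-(1/2) * Ifun y) y := by
  have h1 : HasDerivAt (fun z => gfun z - z / 2 * Ifun z)
      (-(y/2) * gfun y - ((1/2) * Ifun y + y/2 * (-(gfun y)))) y := by
    exact (hasDerivAt_gfun y).sub
      (((hasDerivAt_id y).div_const 2).mul (hasDerivAt_Ifun y))
  have h2 := h1.congr_deriv (by ring : -(y/2) * gfun y - ((1/2) * Ifun y + y/2 * (-(gfun y)))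
    = -(1/2) * Ifun y)
  exact h2.congr_of_eventuallyEq (Filter.Eventually.of_forall fun z => (W1ext_eq z))

lemma deriv_W1ext : deriv W1ext = fun y => -(1/2) * Ifun y :=
  funext fun y => (hasDerivAt_W1ext y).deriv

lemma deriv2_W1ext : deriv (deriv W1ext) = fun y => (1/2) * gfun y := by
  funext y
  rw [deriv_W1ext]
  have : HasDerivAt (fun z => -(1/2) * Ifun z) ((1/2) * gfun y) y := by
    have := (hasDerivAt_Ifun y).const_mul (-(1/2) : ℝ)
    exact this.congr_deriv (by ring)
  exact this.deriv

lemma F16_eq (y : ℝ) :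
    F16 y = (1/4) * (Ifun y)^2 - (gfun y - y/2 * Ifun y) * ((1/2) * gfun y) := by
  rw [F16, deriv2_W1ext, deriv_W1ext, W1ext_eq]; ring

lemma hasDerivAt_F16 (y : ℝ) :
    HasDerivAt F16 (gfun y * (y/4 * gfun y - (2 + y^2)/8 * Ifun y)) y := by
  have h1 : HasDerivAt (fun z => (1/4) * (Ifun z)^2 - (gfun z - z/2 * Ifun z) * ((1/2) * gfun z))
      ((1/4) * (2 * Ifun y * (-(gfun y)))
        - ((-(y/2) * gfun y - ((1/2) * Ifun y + y/2 * (-(gfun y)))) * ((1/2) * gfun y)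
          + (gfun y - y/2 * Ifun y) * ((1/2) * (-(y/2) * gfun y)))) y := by
    have hI := hasDerivAt_Ifun y
    have hg := hasDerivAt_gfun y
    exact (((hI.pow 2).congr_deriv (by ring)).const_mul (1/4)).sub
      ((hg.sub (((hasDerivAt_id y).div_const 2).mul hI)).mul (hg.const_mul (1/2)))
  have := h1.congr_of_eventuallyEq (Filter.Eventually.of_forall fun z => F16_eq z)
  exact this.congr_deriv (by ring)

lemma deriv_F16_neg {y : ℝ} (hy : 0 < y) : deriv F16 y < 0 := by
  rw [(hasDerivAt_F16 y).deriv]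
  have h := Ifun_lower (y := y)
  have hc : (0:ℝ) < (2 + y^2)/8 := by positivity
  have hmul := mul_lt_mul_of_pos_left h hc
  have he : (2 + y^2)/8 * (2*y/(y^2+2) * gfun y) = y/4 * gfun y := by
    field_simp; ring
  have hg := gfun_pos y
  nlinarith [hmul, he]

lemma F16_zero : F16 0 = 1 / 2 * (Real.pi / 2 - 1) := by
  rw [F16_eq, Ifun_zero, Real.sq_sqrt Real.pi_pos.le]
  have : gfun 0 = 1 := by simp [gfun]
  rw [this]; ring

lemma tendsto_F16 : Tendsto F16 atTop (nhds 0) := by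
  have hrw : F16 = fun y => (1/4) * (Ifun y)^2 - (1/2) * (gfun y)^2
      + y/4 * (Ifun y * gfun y) := funext fun y => by rw [F16_eq]; ring
  have h1 : Tendsto (fun y => (1/4) * (Ifun y)^2) atTop (nhds 0) := by
    have := (tendsto_Ifun.mul tendsto_Ifun).const_mul (1/4 : ℝ)
    simpa [pow_two] using this
  have h2 : Tendsto (fun y => (1/2) * (gfun y)^2) atTop (nhds 0) := by
    have := (tendsto_gfun.mul tendsto_gfun).const_mul (1/2 : ℝ)
    simpa [pow_two] using this
  have h3 : Tendsto (fun y => y/4 * (Ifun y * gfun y)) atTop (nhds 0) := by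
    apply squeeze_zero' (g := fun y => (1/2) * (gfun y)^2)
    · filter_upwards [eventually_gt_atTop (0:ℝ)] with y hy
      exact mul_nonneg (by positivity) (mul_nonneg (Ifun_pos y).le (gfun_pos y).le)
    · filter_upwards [eventually_gt_atTop (0:ℝ)] with y hy
      have hub := Ifun_upper hy
      have hg := gfun_pos y
      have : y/4 * (Ifun y * gfun y) ≤ y/4 * ((2/y * gfun y) * gfun y) := by
        apply mul_le_mul_of_nonneg_left _ (by positivity)
        exact mul_le_mul_of_nonneg_right hub hg.le
      calc y/4 * (Ifun y * gfun y) ≤ y/4 * ((2/y * gfun y) * gfun y) := this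
        _ = (1/2) * (gfun y)^2 := by field_simp; ring
    · exact h2
  rw [hrw]
  simpa using (h1.sub h2).add h3

lemma F16_pos {y : ℝ} (hy : 0 < y) : 0 < F16 y := by
  have hdiff : ∀ z : ℝ, DifferentiableAt ℝ F16 z :=
    fun z => (hasDerivAt_F16 z).differentiableAt
  have hanti : StrictAntiOn F16 (Ici 0) := by
    refine strictAntiOn_of_deriv_neg (convex_Ici 0)
      (fun z _ => (hdiff z).continuousAt.continuousWithinAt) ?_
    intro x hx
    rw [interior_Ici] at hx
    exact deriv_F16_neg hx
  have h1 : F16 (y+1) < F16 y := hanti (le_of_lt hy) (by simp; linarith) (lt_add_one y)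
  have h0 : (0:ℝ) ≤ F16 (y+1) := by
    refine le_of_tendsto tendsto_F16 ?_
    filter_upwards [eventually_ge_atTop (y+1)] with z hz
    exact hanti.antitoneOn (by simp; linarith) (by simp; linarith [hz]) hz
  linarith

end Deriv

/-- **Monotonicity of the ratio `W₁/W₁'`.**
`F' < 0` on `(0,∞)`, `F(0) = (1/2)(Real.pi/2 - 1) > 0`, `F → 0` at `∞`; hence `F > 0` on
`(0,∞)` and `(W₁/W₁')' = F/(W₁')² > 0` on `(0,∞)`. -/
theorem F16_positive_and_ratio_increasing :
    (∀ y : ℝ, 0 < y → deriv F16 y < 0) ∧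
    F16 0 = 1 / 2 * (Real.pi / 2 - 1) ∧
    0 < F16 0 ∧
    Tendsto F16 atTop (nhds 0) ∧
    (∀ y : ℝ, 0 < y → 0 < F16 y) ∧
    (∀ y : ℝ, 0 < y →
      deriv (fun z => W1ext z / deriv W1ext z) y = F16 y / (deriv W1ext y) ^ 2 ∧
      0 < deriv (fun z => W1ext z / deriv W1ext z) y) := by
  refine ⟨fun y hy => deriv_F16_neg hy, F16_zero, ?_, tendsto_F16, fun y hy => F16_pos hy, ?_⟩
  · rw [F16_zero]
    nlinarith [Real.pi_gt_three]
  · intro y hy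
    have hI := Ifun_pos y
    have e1 : deriv W1ext y = -(1/2) * Ifun y := by rw [deriv_W1ext]
    have e2 : deriv (deriv W1ext) y = 1/2 * gfun y := by rw [deriv2_W1ext]
    have hne : deriv W1ext y ≠ 0 := by rw [e1]; nlinarith
    have hW' : HasDerivAt (deriv W1ext) (1/2 * gfun y) y := by
      rw [deriv_W1ext]
      exact ((hasDerivAt_Ifun y).const_mul (-(1/2) : ℝ)).congr_deriv (by ring)
    have hW : HasDerivAt W1ext (-(1/2) * Ifun y) y := hasDerivAt_W1ext y
    have hdiv := hW.div hW' hne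
    have heq : deriv (fun z => W1ext z / deriv W1ext z) y = F16 y / (deriv W1ext y) ^ 2 := by
      rw [show (fun z => W1ext z / deriv W1ext z) = W1ext / deriv W1ext from rfl, hdiv.deriv, F16, e1, e2]; ring_nf
    have hden : (0:ℝ) < (deriv W1ext y)^2 := by
      rw [e1]; nlinarith
    exact ⟨heq, heq ▸ div_pos (F16_pos hy) hden⟩
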